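/- The diagonalizable part of any complex square matrix lies in the closure of its conjugation orbit: for every A ∈ ℂ^{n×n} with Jordan decomposition A = S + N (S diagonalizable, N nilpotent, SN = NS), the matrix S lies in the closure of {g A g⁻¹ : g ∈ GLₙ(ℂ)}. -/

import Mathlib

open Matrix Filter Topology

namespace JCAux


noncomputable section

variable {n : ℕ}

abbrev Mat (n : ℕ) := Matrix (Fin n) (Fin n) ℂ

lemma mulVec_ext {A B : Mat n} (h : ∀ x, A *ᵥ x = B *ᵥ x) : A = B :=
  Matrix.toLin'.injective (LinearMap.ext fun x => by simpa [Matrix.toLin'_apply] using h x)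

lemma sum_mulVec {ι : Type*} (s : Finset ι) (f : ι → Mat n) (x : Fin n → ℂ) :
    (∑ i ∈ s, f i) *ᵥ x = ∑ i ∈ s, f i *ᵥ x := by
  classical
  induction s using Finset.induction_on with
  | empty => simp
  | insert _ _ h ih => simp [Finset.sum_insert h, Matrix.add_mulVec, ih]

lemma mem_closure_orbit_of_pi (k : ℕ) (D M : Mat n) (π : ℕ → Mat n)
    (hsum : ∑ m ∈ Finset.range k, π m = 1)
    (horth : ∀ a b, π a * π b = if a = b then π a else 0)
    (hDc : ∀ m, π m * D = D * π m)
    (hlow : ∀ a b, a ≤ b → π a * M * π b = 0) :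
    D ∈ closure {C : Mat n | ∃ g : GL (Fin n) ℂ,
      C = (g : Mat n) * (D + M) * ((g⁻¹ : GL (Fin n) ℂ) : Mat n)} := by
  classical
  set P : ℂ → Mat n := fun t => ∑ m ∈ Finset.range k, t ^ m • π m with hP
  have hmul : ∀ s u : ℂ, P s * P u = ∑ m ∈ Finset.range k, (s * u) ^ m • π m := by
    intro s u
    rw [hP, Finset.sum_mul_sum]
    refine Finset.sum_congr rfl fun a ha => ?_
    have h1 : ∀ b, (s ^ a • π a) * (u ^ b • π b)
        = if a = b then (s * u) ^ a • π a else 0 := by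
      intro b
      rw [smul_mul_smul_comm, horth]
      split_ifs with h
      · subst h; rw [mul_pow]
      · simp
    rw [Finset.sum_congr rfl fun b _ => h1 b, Finset.sum_ite_eq, if_pos ha]
  have hunit : ∀ t : ℂ, t ≠ 0 → P t * P t⁻¹ = 1 ∧ P t⁻¹ * P t = 1 := by
    intro t ht
    constructor
    · rw [hmul, mul_inv_cancel₀ ht]; simpa using hsum
    · rw [hmul, inv_mul_cancel₀ ht]; simpa using hsum
  have hPD : ∀ t, P t * D = D * P t := by
    intro t
    rw [hP, Finset.sum_mul, Finset.mul_sum]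
    refine Finset.sum_congr rfl fun m _ => ?_
    rw [smul_mul_assoc, mul_smul_comm, hDc]
  set F : ℂ → Mat n := fun t => ∑ a ∈ Finset.range k, ∑ b ∈ Finset.range k,
      (t ^ a * (t⁻¹) ^ b) • (π a * M * π b) with hF
  have hPMP : ∀ t : ℂ, P t * M * P t⁻¹ = F t := by
    intro t
    rw [hP, hF, Finset.sum_mul, Finset.sum_mul]
    refine Finset.sum_congr rfl fun a _ => ?_
    rw [Finset.mul_sum]
    refine Finset.sum_congr rfl fun b _ => ?_
    rw [smul_mul_assoc, smul_mul_assoc, mul_smul_comm, smul_smul]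
  have hFlim : Tendsto F (𝓝[≠] (0:ℂ)) (𝓝 0) := by
    have h0 : (0 : Mat n) = ∑ a ∈ Finset.range k, ∑ b ∈ Finset.range k, (0 : Mat n) := by simp
    rw [h0]
    refine tendsto_finset_sum _ fun a _ => tendsto_finset_sum _ fun b _ => ?_
    rcases le_or_gt a b with hab | hab
    · simpa [hlow a b hab] using
        (tendsto_const_nhds : Tendsto (fun _ : ℂ => (0 : Mat n)) (𝓝[≠] (0:ℂ)) (𝓝 0))
    · have h1 : Tendsto (fun t : ℂ => t ^ (a - b)) (𝓝 (0:ℂ)) (𝓝 0) := by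
        simpa [zero_pow (by omega : a - b ≠ 0)] using (continuous_pow (a - b)).tendsto (0 : ℂ)
      have h2 : Tendsto (fun t : ℂ => t ^ a * (t⁻¹) ^ b) (𝓝[≠] (0:ℂ)) (𝓝 0) := by
        refine (h1.mono_left nhdsWithin_le_nhds).congr' ?_
        filter_upwards [self_mem_nhdsWithin] with t ht
        have ht' : t ≠ 0 := ht
        have : t ^ a = t ^ (a - b) * t ^ b := by rw [← pow_add]; congr 1; omega
        rw [this, mul_assoc, ← mul_pow, mul_inv_cancel₀ ht', one_pow, mul_one]
      simpa using h2.smul_const (π a * M * π b)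
  have hΦ : Tendsto (fun t => D + F t) (𝓝[≠] (0:ℂ)) (𝓝 D) := by
    simpa using (tendsto_const_nhds : Tendsto (fun _ : ℂ => D) (𝓝[≠] (0:ℂ)) (𝓝 D)).add hFlim
  refine mem_closure_of_tendsto hΦ ?_
  filter_upwards [self_mem_nhdsWithin] with t ht
  have ht' : (t : ℂ) ≠ 0 := ht
  obtain ⟨hu1, hu2⟩ := hunit t ht'
  refine ⟨⟨P t, P t⁻¹, hu1, hu2⟩, ?_⟩
  show D + F t = P t * (D + M) * P t⁻¹
  rw [mul_add, add_mul, hPMP, hPD, mul_assoc, hu1, mul_one]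


/-- iterated product of projections onto a decreasing chain -/
def Gmat (R : ℕ → Mat n) (k : ℕ) : ℕ → Mat n
  | 0 => 1
  | (i+1) => R (k - (i+1)) * Gmat R k i

lemma buildPi (k : ℕ) (d : Fin n → ℂ) (M : Mat n)
    (hDM : Matrix.diagonal d * M = M * Matrix.diagonal d) (hMk : M ^ k = 0) :
    ∃ π : ℕ → Mat n, (∑ m ∈ Finset.range k, π m = 1) ∧
      (∀ a b, π a * π b = if a = b then π a else 0) ∧
      (∀ m, π m * Matrix.diagonal d = Matrix.diagonal d * π m) ∧
      (∀ a b, a ≤ b → π a * M * π b = 0) := by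
  classical
  have hentry : ∀ i j, d i * M i j = M i j * d j := by
    intro i j
    have h1 := Matrix.ext_iff.mpr hDM i j
    simpa [Matrix.diagonal_mul, Matrix.mul_diagonal] using h1
  have hMoff : ∀ i j, d i ≠ d j → M i j = 0 := by
    intro i j hne
    have h1 : (d i - d j) * M i j = 0 := by
      have := hentry i j
      ring_nf
      linear_combination this
    exact (mul_eq_zero.mp h1).resolve_left (sub_ne_zero.mpr hne)
  set e : ℂ → Mat n := fun μ => Matrix.diagonal (fun i => if d i = μ then 1 else 0) with he
  have hee : ∀ μ ν, e μ * e ν = if μ = ν then e μ else 0 := by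
    intro μ ν
    rw [he]
    simp only [Matrix.diagonal_mul_diagonal]
    split_ifs with hμν
    · subst hμν
      ext i j
      rcases eq_or_ne i j with rfl | hij
      · by_cases hi : d i = μ <;> simp [Matrix.diagonal_apply_eq, hi]
      · simp [Matrix.diagonal_apply_ne _ hij]
    · ext i j
      rcases eq_or_ne i j with rfl | hij
      · by_cases h1 : d i = μ <;> by_cases h2 : d i = ν <;>
          simp_all [Matrix.diagonal_apply_eq]
      · simp [Matrix.diagonal_apply_ne _ hij]
  have hesum : ∑ μ ∈ Finset.univ.image d, e μ = 1 := by
    ext i j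
    rw [Matrix.sum_apply]
    by_cases hij : i = j
    · subst hij
      simp only [he, Matrix.diagonal_apply_eq]
      rw [Finset.sum_ite_eq (Finset.univ.image d) (d i) (fun _ => (1:ℂ)),
        if_pos (Finset.mem_image_of_mem d (Finset.mem_univ i)), Matrix.one_apply_eq]
    · simp [he, Matrix.diagonal_apply_ne _ hij, Matrix.one_apply_ne hij]
  have heM : ∀ μ, e μ * M = M * e μ := by
    intro μ; ext i j
    simp only [he, Matrix.diagonal_mul, Matrix.mul_diagonal]
    rcases eq_or_ne (d i) (d j) with hd | hd
    · rw [hd, mul_comm]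
    · rw [hMoff i j hd, mul_zero, zero_mul]
  have heD1 : ∀ μ, e μ * Matrix.diagonal d = μ • e μ := by
    intro μ; ext i j
    rcases eq_or_ne i j with rfl | hij
    · simp only [he, Matrix.diagonal_mul_diagonal, Matrix.diagonal_apply_eq, Matrix.smul_apply]
      by_cases hi : d i = μ <;> simp [hi]
    · simp [he, Matrix.diagonal_apply_ne _ hij, Matrix.diagonal_mul_diagonal]
  have heD2 : ∀ μ, Matrix.diagonal d * e μ = μ • e μ := by
    intro μ; ext i j
    rcases eq_or_ne i j with rfl | hij
    · simp only [he, Matrix.diagonal_mul_diagonal, Matrix.diagonal_apply_eq, Matrix.smul_apply]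
      by_cases hi : d i = μ <;> simp [hi]
    · simp [he, Matrix.diagonal_apply_ne _ hij, Matrix.diagonal_mul_diagonal]
  -- kernel filtration
  set K : ℕ → Submodule ℂ (Fin n → ℂ) := fun j => LinearMap.ker ((M ^ j).mulVecLin) with hK
  have hKmem : ∀ j x, x ∈ K j ↔ (M ^ j) *ᵥ x = 0 := by
    intro j x; simp [hK, LinearMap.mem_ker, Matrix.mulVecLin_apply]
  have hKmono : ∀ {a b : ℕ}, a ≤ b → K a ≤ K b := by
    intro a b hab x hx
    rw [hKmem] at hx ⊢
    have h1 : M ^ b = M ^ (b - a) * M ^ a := by rw [← pow_add]; congr 1; omega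
    rw [h1, ← Matrix.mulVec_mulVec, hx, Matrix.mulVec_zero]
  have hKtop : ∀ x, x ∈ K k := fun x => by rw [hKmem, hMk, Matrix.zero_mulVec]
  have hMKstep : ∀ j x, x ∈ K (j+1) → M *ᵥ x ∈ K j := by
    intro j x hx
    rw [hKmem] at hx ⊢
    rw [Matrix.mulVec_mulVec, ← pow_succ, hx]
  have heK : ∀ μ j x, x ∈ K j → e μ *ᵥ x ∈ K j := by
    intro μ j x hx
    rw [hKmem] at hx ⊢
    have hcomm : Commute (e μ) M := heM μ
    rw [Matrix.mulVec_mulVec, ((hcomm.symm).pow_left j).eq, ← Matrix.mulVec_mulVec, hx,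
      Matrix.mulVec_zero]
  have htoM : ∀ (f : (Fin n → ℂ) →ₗ[ℂ] (Fin n → ℂ)) (x), (LinearMap.toMatrix' f) *ᵥ x = f x := by
    intro f x; rw [← Matrix.toLin'_apply, Matrix.toLin'_toMatrix']
  have hQex : ∀ j, ∃ Q : Mat n, (∀ x, Q *ᵥ x ∈ K j) ∧ (∀ x ∈ K j, Q *ᵥ x = x) := by
    intro j
    obtain ⟨q, hq⟩ := Submodule.exists_isCompl (K j)
    refine ⟨LinearMap.toMatrix' ((K j).subtype ∘ₗ (K j).projectionOnto q hq), ?_, ?_⟩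
    · intro x; rw [htoM]; exact Submodule.coe_mem _
    · intro x hx
      rw [htoM]
      have := Submodule.linearProjOfIsCompl_apply_left hq ⟨x, hx⟩
      simp only [LinearMap.comp_apply, Submodule.subtype_apply]
      rw [show ((⟨x, hx⟩ : K j) : Fin n → ℂ) = x from rfl] at this
      rw [this]
  choose Qm hQ1 hQ2 using hQex
  set R : ℕ → Mat n := fun j => ∑ μ ∈ Finset.univ.image d, e μ * Qm j * e μ with hR
  have hdecomp : ∀ (μ : ℂ) (j) (x), (e μ * Qm j * e μ) *ᵥ x = e μ *ᵥ (Qm j *ᵥ (e μ *ᵥ x)) := by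
    intro μ j x
    simp [Matrix.mulVec_mulVec, mul_assoc]
  have hR1 : ∀ j x, R j *ᵥ x ∈ K j := by
    intro j x
    rw [hR, sum_mulVec]
    refine Submodule.sum_mem _ fun μ _ => ?_
    rw [hdecomp]
    exact heK _ _ _ (hQ1 j _)
  have hR2 : ∀ j x, x ∈ K j → R j *ᵥ x = x := by
    intro j x hx
    rw [hR, sum_mulVec]
    have h1 : ∀ μ ∈ Finset.univ.image d, (e μ * Qm j * e μ) *ᵥ x = e μ *ᵥ x := by
      intro μ _
      rw [hdecomp, hQ2 j _ (heK μ j x hx), Matrix.mulVec_mulVec, hee, if_pos rfl]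
    rw [Finset.sum_congr rfl h1, ← sum_mulVec, hesum, Matrix.one_mulVec]
  have hRD : ∀ j, R j * Matrix.diagonal d = Matrix.diagonal d * R j := by
    intro j
    rw [hR, Finset.sum_mul, Finset.mul_sum]
    refine Finset.sum_congr rfl fun μ _ => ?_
    have h1 : e μ * Qm j * e μ * Matrix.diagonal d = μ • (e μ * Qm j * e μ) := by
      rw [mul_assoc (e μ * Qm j), heD1, mul_smul_comm]
    have h2 : Matrix.diagonal d * (e μ * Qm j * e μ) = μ • (e μ * Qm j * e μ) := by
      rw [← mul_assoc, ← mul_assoc, heD2, smul_mul_assoc, smul_mul_assoc]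
    rw [h1, h2]
  -- the chain of products
  set G : ℕ → Mat n := Gmat R k with hG
  have hG0 : G 0 = 1 := rfl
  have hGs : ∀ i, G (i+1) = R (k - (i+1)) * G i := fun i => rfl
  have hG1 : ∀ i x, G i *ᵥ x ∈ K (k - i) := by
    intro i x
    cases i with
    | zero => simpa [hG0, Matrix.one_mulVec] using hKtop x
    | succ i => rw [hGs, ← Matrix.mulVec_mulVec]; exact hR1 _ _
  have hG2 : ∀ i x, x ∈ K (k - i) → G i *ᵥ x = x := by
    intro i
    induction i with
    | zero => intro x hx; simp [hG0, Matrix.one_mulVec]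
    | succ i ih =>
      intro x hx
      have hx' : x ∈ K (k - i) := hKmono (by omega) hx
      rw [hGs, ← Matrix.mulVec_mulVec, ih x hx', hR2 _ _ hx]
  have hGD : ∀ i, G i * Matrix.diagonal d = Matrix.diagonal d * G i := by
    intro i
    induction i with
    | zero => simp [hG0]
    | succ i ih => rw [hGs, mul_assoc, ih, ← mul_assoc, hRD, mul_assoc]
  have hGabs1 : ∀ a b, a ≤ b → G a * G b = G b := by
    intro a b hab
    apply mulVec_ext; intro x
    rw [← Matrix.mulVec_mulVec]
    exact hG2 a _ (hKmono (by omega) (hG1 b x))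
  have hGabs2 : ∀ a b, a ≤ b → G b * G a = G b := by
    intro a b hab
    induction b, hab using Nat.le_induction with
    | base => exact hGabs1 a a le_rfl
    | succ b hab ih => rw [hGs, mul_assoc, ih]
  have hGmax : ∀ a b, G a * G b = G (max a b) := by
    intro a b
    rcases le_total a b with h | h
    · rw [hGabs1 a b h, max_eq_right h]
    · rw [hGabs2 b a h, max_eq_left h]
  have hGk : G k = 0 := by
    apply mulVec_ext; intro x
    have h := hG1 k x
    rw [Nat.sub_self, hKmem, pow_zero, Matrix.one_mulVec] at h
    rw [h, Matrix.zero_mulVec]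
  refine ⟨fun m => G m - G (m+1), ?_, ?_, ?_, ?_⟩
  · rw [Finset.sum_range_sub' (fun i => G i) k, hG0, hGk, sub_zero]
  · intro a b
    have expand : (G a - G (a+1)) * (G b - G (b+1))
        = G (max a b) - G (max a (b+1)) - G (max (a+1) b) + G (max (a+1) (b+1)) := by
      rw [sub_mul, mul_sub, mul_sub, hGmax, hGmax, hGmax, hGmax]; abel
    rcases lt_trichotomy a b with h | h | h
    · rw [expand, if_neg (by omega),
        max_eq_right h.le, max_eq_right (by omega : a ≤ b+1),
        max_eq_right (by omega : a+1 ≤ b), max_eq_right (by omega : a+1 ≤ b+1)]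
      abel
    · subst h
      rw [expand, if_pos rfl, max_self, max_eq_right (by omega : a ≤ a+1),
        max_eq_left (by omega : a ≤ a+1), max_self]
      abel
    · rw [expand, if_neg (by omega),
        max_eq_left h.le, max_eq_left (by omega : b+1 ≤ a),
        max_eq_left (by omega : b ≤ a+1), max_eq_left (by omega : b+1 ≤ a+1)]
      abel
  · intro m
    rw [sub_mul, mul_sub, hGD, hGD]
  · intro a b hab
    apply mulVec_ext; intro x
    rw [Matrix.zero_mulVec]
    have h1 : (G b - G (b+1)) *ᵥ x ∈ K (k - b) := by
      rw [Matrix.sub_mulVec]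
      exact Submodule.sub_mem _ (hG1 b x) (hKmono (by omega) (hG1 (b+1) x))
    set y := (G b - G (b+1)) *ᵥ x with hy
    have h2 : M *ᵥ y ∈ K (k - (b+1)) := by
      by_cases hkb : b + 1 ≤ k
      · have heq : k - b = (k - (b+1)) + 1 := by omega
        rw [heq] at h1
        exact hMKstep _ _ h1
      · have h0 : k - b = 0 := by omega
        rw [h0, hKmem, pow_zero, Matrix.one_mulVec] at h1
        rw [hKmem, h1, Matrix.mulVec_zero, Matrix.mulVec_zero]
    have h3 : M *ᵥ y ∈ K (k - (a+1)) := hKmono (by omega) h2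
    have h4 : M *ᵥ y ∈ K (k - a) := hKmono (by omega) h3
    rw [mul_assoc, ← Matrix.mulVec_mulVec, ← Matrix.mulVec_mulVec, ← hy,
      Matrix.sub_mulVec, hG2 a _ h4, hG2 (a+1) _ h3, sub_self]


end

section
variable {n : ℕ}
lemma conj_mem_closure (A X : Mat n) (h : GL (Fin n) ℂ)
    (hX : X ∈ closure {C : Mat n | ∃ u : GL (Fin n) ℂ, C = (u : Mat n) * A * ((u⁻¹ : GL (Fin n) ℂ) : Mat n)}) :
    (h : Mat n) * X * ((h⁻¹ : GL (Fin n) ℂ) : Mat n) ∈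
      closure {C : Mat n | ∃ u : GL (Fin n) ℂ, C = (u : Mat n) * A * ((u⁻¹ : GL (Fin n) ℂ) : Mat n)} := by
  refine map_mem_closure (f := fun Y : Mat n => (h : Mat n) * Y * ((h⁻¹ : GL (Fin n) ℂ) : Mat n))
    ?_ hX ?_
  · exact (continuous_const.matrix_mul continuous_id).matrix_mul continuous_const
  · rintro C ⟨u, rfl⟩
    refine ⟨h * u, ?_⟩
    rw [_root_.mul_inv_rev, Units.val_mul, Units.val_mul]
    simp [mul_assoc]

lemma conj_prod (g : GL (Fin n) ℂ) (X Y : Mat n) :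
    ((g : Mat n) * X * ((g⁻¹ : GL (Fin n) ℂ) : Mat n)) * ((g : Mat n) * Y * ((g⁻¹ : GL (Fin n) ℂ) : Mat n))
      = (g : Mat n) * (X * Y) * ((g⁻¹ : GL (Fin n) ℂ) : Mat n) := by
  have h1 : ((g⁻¹ : GL (Fin n) ℂ) : Mat n) * ((g : Mat n) * (Y * ((g⁻¹ : GL (Fin n) ℂ) : Mat n)))
      = Y * ((g⁻¹ : GL (Fin n) ℂ) : Mat n) := by
    rw [← mul_assoc, Units.inv_mul, one_mul]
  calc ((g : Mat n) * X * ((g⁻¹ : GL (Fin n) ℂ) : Mat n)) * ((g : Mat n) * Y * ((g⁻¹ : GL (Fin n) ℂ) : Mat n))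
      = (g : Mat n) * (X * (((g⁻¹ : GL (Fin n) ℂ) : Mat n) * ((g : Mat n) * (Y * ((g⁻¹ : GL (Fin n) ℂ) : Mat n))))) := by
        simp only [mul_assoc]
    _ = (g : Mat n) * (X * (Y * ((g⁻¹ : GL (Fin n) ℂ) : Mat n))) := by rw [h1]
    _ = (g : Mat n) * (X * Y) * ((g⁻¹ : GL (Fin n) ℂ) : Mat n) := by simp only [mul_assoc]

lemma conj_pow (g : GL (Fin n) ℂ) (X : Mat n) (k : ℕ) :
    ((g : Mat n) * X * ((g⁻¹ : GL (Fin n) ℂ) : Mat n)) ^ k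
      = (g : Mat n) * X ^ k * ((g⁻¹ : GL (Fin n) ℂ) : Mat n) := by
  induction k with
  | zero => rw [pow_zero, pow_zero, mul_one, Units.mul_inv]
  | succ k ih => rw [pow_succ, pow_succ, ih, conj_prod]


end

end JCAux

open JCAux Matrix

/-- The diagonalizable part of the Jordan–Chevalley decomposition of a complex matrix lies
in the closure of its conjugation orbit. -/
theorem semisimple_part_mem_closure_conjugation_orbit
    (n : ℕ) (A S N : Matrix (Fin n) (Fin n) ℂ)
    (hsum : A = S + N)
    (hdiag : ∃ g : GL (Fin n) ℂ, ∃ d : Fin n → ℂ,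
      (g : Matrix (Fin n) (Fin n) ℂ) * S * ((g⁻¹ : GL (Fin n) ℂ) : Matrix (Fin n) (Fin n) ℂ)
        = Matrix.diagonal d)
    (hnil : IsNilpotent N) (hcomm : Commute S N) :
    S ∈ closure {C : Matrix (Fin n) (Fin n) ℂ |
      ∃ g : GL (Fin n) ℂ,
        C = (g : Matrix (Fin n) (Fin n) ℂ) * A * ((g⁻¹ : GL (Fin n) ℂ) : Matrix (Fin n) (Fin n) ℂ)} := by
  classical
  obtain ⟨g, d, hgd⟩ := hdiag
  obtain ⟨k, hk⟩ := hnil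
  set D : Mat n := Matrix.diagonal d with hD
  set M : Mat n := (g : Mat n) * N * ((g⁻¹ : GL (Fin n) ℂ) : Mat n) with hM
  have hDM : D * M = M * D := by
    rw [hM, ← hgd, JCAux.conj_prod, JCAux.conj_prod, hcomm.eq]
  have hMk : M ^ k = 0 := by
    rw [hM, JCAux.conj_pow, hk, mul_zero, zero_mul]
  obtain ⟨π, h1, h2, h3, h4⟩ := buildPi k d M hDM hMk
  have hDcl := mem_closure_orbit_of_pi k D M π h1 h2 h3 h4
  have hgA : (g : Mat n) * A * ((g⁻¹ : GL (Fin n) ℂ) : Mat n) = D + M := by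
    rw [hsum, mul_add, add_mul, hgd, hD, hM]
  have hsub : {C : Mat n | ∃ u : GL (Fin n) ℂ, C = (u : Mat n) * (D + M) * ((u⁻¹ : GL (Fin n) ℂ) : Mat n)}
      ⊆ {C : Mat n | ∃ u : GL (Fin n) ℂ, C = (u : Mat n) * A * ((u⁻¹ : GL (Fin n) ℂ) : Mat n)} := by
    rintro C ⟨u, rfl⟩
    refine ⟨u * g, ?_⟩
    rw [← hgA, _root_.mul_inv_rev, Units.val_mul, Units.val_mul]
    simp [mul_assoc]
  have hDO : D ∈ closure {C : Mat n | ∃ u : GL (Fin n) ℂ,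
      C = (u : Mat n) * A * ((u⁻¹ : GL (Fin n) ℂ) : Mat n)} := closure_mono hsub hDcl
  have hfinal := conj_mem_closure A D g⁻¹ hDO
  have hSid : ((g⁻¹ : GL (Fin n) ℂ) : Mat n) * D * (((g⁻¹)⁻¹ : GL (Fin n) ℂ) : Mat n) = S := by
    rw [inv_inv, ← hgd]
    calc ((g⁻¹ : GL (Fin n) ℂ) : Mat n) * ((g : Mat n) * S * ((g⁻¹ : GL (Fin n) ℂ) : Mat n)) * (g : Mat n)
        = (((g⁻¹ : GL (Fin n) ℂ) : Mat n) * (g : Mat n)) * S * (((g⁻¹ : GL (Fin n) ℂ) : Mat n) * (g : Mat n)) := by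
          simp only [mul_assoc]
      _ = S := by rw [Units.inv_mul, one_mul, mul_one]
  rwa [hSid] at hfinal
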